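/- Let ψ be a unit vector in a Hilbert space and Π an orthogonal projection with Πψ ≠ 0. Write sin θ = ‖Πψ‖ with θ ∈ (0, π/2], let R_ψ = 2|ψ⟩⟨ψ| − I and R_Π = 2Π − I, and let m = ⌊π/(4θ)⌋. Then ‖ Π·(−R_ψ R_Π)^m ψ ‖² ≥ max(sin²θ, 1 − sin²θ) ≥ 1/2. -/

import Mathlib

open Real RealInnerProductSpace

private lemma amp_trig {θ : ℝ} (hθ0 : 0 < θ) (hθ1 : θ ≤ π / 2) (m : ℕ)
    (hm : m = ⌊π / (4 * θ)⌋₊) :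
    max (Real.sin θ ^ 2) (1 - Real.sin θ ^ 2) ≤ Real.sin ((2 * (m : ℝ) + 1) * θ) ^ 2 := by
  have hπ : (0:ℝ) < π := Real.pi_pos
  have h4θ : (0:ℝ) < 4 * θ := by linarith
  have hfl : (m : ℝ) ≤ π / (4 * θ) := by
    rw [hm]; exact Nat.floor_le (by positivity)
  have hfu : π / (4 * θ) < (m : ℝ) + 1 := by
    rw [hm]; exact Nat.lt_floor_add_one _
  rw [le_div_iff₀ h4θ] at hfl
  rw [div_lt_iff₀ h4θ] at hfu
  have hxle : |(2 * (m:ℝ) + 1) * θ - π / 2| ≤ θ := by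
    rw [abs_le]
    constructor
    · nlinarith
    · nlinarith
  have hsin : Real.sin ((2 * (m:ℝ) + 1) * θ) = Real.cos ((2 * (m:ℝ) + 1) * θ - π / 2) := by
    have h1 := Real.sin_add_pi_div_two ((2 * (m:ℝ) + 1) * θ - π / 2)
    rw [sub_add_cancel] at h1
    exact h1
  have hcos : Real.cos θ ≤ Real.cos ((2 * (m:ℝ) + 1) * θ - π / 2) := by
    have h1 : Real.cos θ ≤ Real.cos |(2 * (m:ℝ) + 1) * θ - π / 2| :=
      Real.cos_le_cos_of_nonneg_of_le_pi (abs_nonneg _) (by linarith) hxle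
    rwa [Real.cos_abs] at h1
  have hcosθ : 0 ≤ Real.cos θ := Real.cos_nonneg_of_mem_Icc ⟨by linarith, hθ1⟩
  have hcos2 : 1 - Real.sin θ ^ 2 ≤ Real.sin ((2 * (m:ℝ) + 1) * θ) ^ 2 := by
    rw [hsin, ← Real.cos_sq']
    exact pow_le_pow_left₀ hcosθ hcos 2
  rcases le_or_gt θ (π / 4) with h | h
  · refine max_le ?_ hcos2
    have hss : Real.sin θ ≤ Real.cos θ := by
      rw [← Real.sin_pi_div_two_sub]
      apply Real.sin_le_sin_of_le_of_le_pi_div_two (by linarith) (by linarith) (by linarith)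
    have h1 : Real.sin θ ≤ Real.sin ((2 * (m:ℝ) + 1) * θ) := by rw [hsin]; linarith
    have hs0 : 0 ≤ Real.sin θ := Real.sin_nonneg_of_nonneg_of_le_pi hθ0.le (by linarith)
    exact pow_le_pow_left₀ hs0 h1 2
  · have hm0 : m = 0 := by
      rw [hm, Nat.floor_eq_zero, div_lt_one h4θ]; linarith
    subst hm0
    refine max_le ?_ hcos2
    push_cast
    rw [show (2 * (0:ℝ) + 1) * θ = θ by ring]

/-- Amplitude amplification (Brassard–Høyer–Mosca–Tapp): with `sin θ = ‖Πψ‖`,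
`θ ∈ (0, π/2]` and `m = ⌊π/(4θ)⌋` applications of the Grover iterate
`−R_ψ R_Π`, the squared overlap with the image of `Π` is at least
`max(sin²θ, 1−sin²θ) ≥ 1/2`. -/
theorem amplitude_amplification
    {E : Type*} [NormedAddCommGroup E] [InnerProductSpace ℝ E] [CompleteSpace E]
    (ψ : E) (hψ : ‖ψ‖ = 1)
    (P : E →L[ℝ] E) (hPsa : IsSelfAdjoint P) (hP2 : P * P = P)
    (hPψ : P ψ ≠ 0)
    (θ : ℝ) (hθ0 : 0 < θ) (hθ1 : θ ≤ π / 2) (hsin : Real.sin θ = ‖P ψ‖)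
    (Rψ RP : E →L[ℝ] E)
    (hRψ : ∀ x, Rψ x = (2 * ⟪ψ, x⟫) • ψ - x)
    (hRP : RP = (2 : ℝ) • P - 1)
    (m : ℕ) (hm : m = ⌊π / (4 * θ)⌋₊) :
    max (Real.sin θ ^ 2) (1 - Real.sin θ ^ 2) ≤ ‖P (((-(Rψ * RP)) ^ m) ψ)‖ ^ 2 ∧
    (1 : ℝ) / 2 ≤ ‖P (((-(Rψ * RP)) ^ m) ψ)‖ ^ 2 := by
  have hmax : (1:ℝ)/2 ≤ max (Real.sin θ ^ 2) (1 - Real.sin θ ^ 2) := by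
    rcases le_total (Real.sin θ ^ 2) (1/2) with h | h
    · exact le_max_of_le_right (by linarith)
    · exact le_max_of_le_left h
  suffices h : max (Real.sin θ ^ 2) (1 - Real.sin θ ^ 2) ≤ ‖P (((-(Rψ * RP)) ^ m) ψ)‖ ^ 2 by
    exact ⟨h, le_trans hmax h⟩
  have hπ := Real.pi_pos
  rcases eq_or_lt_of_le hθ1 with hEq | hlt
  · -- θ = π/2 : then m = 0 and ‖Pψ‖ = 1
    have hm0 : m = 0 := by
      rw [hm, Nat.floor_eq_zero, div_lt_one (by linarith), hEq]; linarith
    subst hm0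
    simp only [pow_zero, ContinuousLinearMap.one_apply]
    rw [← hsin, hEq, Real.sin_pi_div_two]
    norm_num
  · -- θ < π/2
    set sθ := Real.sin θ with hsθdef
    set cθ := Real.cos θ with hcθdef
    have hs0 : 0 < sθ := Real.sin_pos_of_pos_of_lt_pi hθ0 (by linarith)
    have hc0 : 0 < cθ := Real.cos_pos_of_mem_Ioo ⟨by linarith, hlt⟩
    set u := P ψ with hu
    set v := ψ - P ψ with hv
    have hPu : P u = u := by
      have h1 := ContinuousLinearMap.ext_iff.mp hP2 ψ
      rwa [ContinuousLinearMap.mul_apply] at h1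
    have hPv : P v = 0 := by
      rw [hv, map_sub, hPu]; exact sub_self _
    have hψuv : ψ = u + v := by rw [hv]; abel
    have hinner_u : ⟪ψ, u⟫ = sθ ^ 2 := by
      have h1 : ⟪u, u⟫ = ⟪ψ, P u⟫ := hPsa.isSymmetric ψ u
      rw [hPu] at h1
      rw [← h1, real_inner_self_eq_norm_sq, ← hsin]
    have hinner_v : ⟪ψ, v⟫ = cθ ^ 2 := by
      rw [hv, inner_sub_right, real_inner_self_eq_norm_sq, hψ, hinner_u, one_pow,
        hsθdef, hcθdef, Real.cos_sq']
    have hRPuv : ∀ s c : ℝ, RP (s • u + c • v) = s • u - c • v := by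
      intro s c
      rw [hRP]
      simp only [ContinuousLinearMap.sub_apply, ContinuousLinearMap.smul_apply,
        ContinuousLinearMap.one_apply, map_add, map_smul, hPu, hPv, smul_zero, add_zero]
      module
    have hA : ∀ s c : ℝ, (-(Rψ * RP)) (s • u + c • v) =
        (s * (1 - 2 * sθ ^ 2) + 2 * c * cθ ^ 2) • u +
        ((2 * cθ ^ 2 - 1) * c - 2 * s * sθ ^ 2) • v := by
      intro s c
      rw [ContinuousLinearMap.neg_apply, ContinuousLinearMap.mul_apply, hRPuv, hRψ]
      have hin : ⟪ψ, s • u - c • v⟫ = s * sθ ^ 2 - c * cθ ^ 2 := by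
        rw [inner_sub_right, real_inner_smul_right, real_inner_smul_right, hinner_u, hinner_v]
      rw [hin, hψuv]
      module
    have key : ∀ k : ℕ, ((-(Rψ * RP)) ^ k) ψ =
        (Real.sin ((2 * (k:ℝ) + 1) * θ) / sθ) • u +
        (Real.cos ((2 * (k:ℝ) + 1) * θ) / cθ) • v := by
      intro k
      induction k with
      | zero =>
        simp only [pow_zero, ContinuousLinearMap.one_apply, Nat.cast_zero]
        rw [show (2 * (0:ℝ) + 1) * θ = θ by ring, ← hsθdef, ← hcθdef,
          div_self hs0.ne', div_self hc0.ne', one_smul, one_smul]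
        exact hψuv
      | succ k ih =>
        have hpy : sθ ^ 2 + cθ ^ 2 = 1 := by
          rw [hsθdef, hcθdef]; exact Real.sin_sq_add_cos_sq θ
        have hstep : (2 * ((k:ℝ) + 1) + 1) * θ = (2 * (k:ℝ) + 1) * θ + 2 * θ := by ring
        have h2c : Real.cos (2 * θ) = 2 * cθ ^ 2 - 1 := by
          rw [Real.cos_two_mul, hcθdef]
        have h2c' : Real.cos (2 * θ) = 1 - 2 * sθ ^ 2 := by
          rw [h2c]; linarith
        have h2s : Real.sin (2 * θ) = 2 * sθ * cθ := by
          rw [Real.sin_two_mul, hsθdef, hcθdef]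
        have ha : Real.sin ((2 * ((k:ℝ) + 1) + 1) * θ) / sθ =
            Real.sin ((2 * (k:ℝ) + 1) * θ) / sθ * (1 - 2 * sθ ^ 2) +
            2 * (Real.cos ((2 * (k:ℝ) + 1) * θ) / cθ) * cθ ^ 2 := by
          rw [hstep, Real.sin_add, h2c', h2s]
          field_simp
        have hb : Real.cos ((2 * ((k:ℝ) + 1) + 1) * θ) / cθ =
            (2 * cθ ^ 2 - 1) * (Real.cos ((2 * (k:ℝ) + 1) * θ) / cθ) -
            2 * (Real.sin ((2 * (k:ℝ) + 1) * θ) / sθ) * sθ ^ 2 := by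
          rw [hstep, Real.cos_add, h2c, h2s]
          field_simp
        rw [pow_succ', ContinuousLinearMap.mul_apply, ih, hA]
        push_cast
        rw [ha, hb]
    have hfin : P (((-(Rψ * RP)) ^ m) ψ) = (Real.sin ((2 * (m:ℝ) + 1) * θ) / sθ) • u := by
      rw [key m, map_add, map_smul, map_smul, hPu, hPv, smul_zero, add_zero]
    rw [hfin, norm_smul, Real.norm_eq_abs, ← hsin]
    have hsq : (|Real.sin ((2 * (m:ℝ) + 1) * θ) / sθ| * sθ) ^ 2 =
        Real.sin ((2 * (m:ℝ) + 1) * θ) ^ 2 := by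
      rw [mul_pow, sq_abs, div_pow]
      field_simp
    rw [hsq, hsθdef]
    exact amp_trig hθ0 hθ1 m hm
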